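/- arXiv:0805.3333 — 2 statements merged into one kernel-verified Lean document; each statement's English description precedes it below -/
import Mathlib

section
/- Let A = [[A11, A12],[A21, A22]] be an invertible N×N matrix with A11 invertible, and B = [[0,0],[0,B22]] with B22 invertible N'×N'. Set G = B22^{-1}(A22 − A21 A11^{-1} A12), which is invertible since A is. Then the stable subspace of A^{-1}B (the sum of generalized eigenspaces of A^{-1}B for eigenvalues of negative real part) equals {(−A11^{-1} A12 r, r) : r ∈ E_-(G)}, where E_-(G) is the stable subspace of G. In particular dim E_-(A^{-1}B) = dim E_-(G). -/
open Matrix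

/-- The stable subspace of a matrix: the sum of the generalized eigenspaces associated with
eigenvalues of negative real part. -/
noncomputable def stableSubspace {ι : Type} [Fintype ι] (M : Matrix ι ι ℂ) :
    Submodule ℂ (ι → ℂ) :=
  ⨆ μ : ℂ, ⨆ _ : μ.re < 0, Module.End.maxGenEigenspace M.mulVecLin μ

section Aux

variable {V W U : Type*} [AddCommGroup V] [Module ℂ V] [AddCommGroup W] [Module ℂ W]
  [AddCommGroup U] [Module ℂ U]

/-- Intertwining lemma: if `φ` intertwines `g` with `f`, `π` intertwines `f` with `g`,
`ψ ∘ f = 0`, and `ψ v = 0` forces `v = φ (π v)`, then for `μ ≠ 0` the generalized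
eigenspace of `f` at `μ` is the image under `φ` of that of `g`. -/
lemma maxGen_map_eq (f : Module.End ℂ V) (g : Module.End ℂ W) (φ : W →ₗ[ℂ] V)
    (π : V →ₗ[ℂ] W) (ψ : V →ₗ[ℂ] U)
    (hfφ : ∀ w, f (φ w) = φ (g w)) (hπ : ∀ v, π (f v) = g (π v))
    (hψ : ∀ v, ψ (f v) = 0) (hrec : ∀ v, ψ v = 0 → v = φ (π v))
    {μ : ℂ} (hμ : μ ≠ 0) :
    f.maxGenEigenspace μ = Submodule.map φ (g.maxGenEigenspace μ) := by
  have step1 : ∀ w, (f - μ • 1) (φ w) = φ ((g - μ • 1) w) := by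
    intro w
    simp only [LinearMap.sub_apply, LinearMap.smul_apply, Module.End.one_apply, LinearMap.map_sub,
      LinearMap.map_smul, hfφ]
  have key1 : ∀ (k : ℕ) (w : W), ((f - μ • 1) ^ k) (φ w) = φ (((g - μ • 1) ^ k) w) := by
    intro k
    induction k with
    | zero => simp
    | succ k ih =>
      intro w
      rw [pow_succ', pow_succ', Module.End.mul_apply, Module.End.mul_apply, ih, step1]
  have key2 : ∀ (k : ℕ) (v : V), π (((f - μ • 1) ^ k) v) = ((g - μ • 1) ^ k) (π v) := by
    intro k
    induction k with
    | zero => simp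
    | succ k ih =>
      intro v
      rw [pow_succ, pow_succ, Module.End.mul_apply, Module.End.mul_apply, ih]
      congr 1
      simp only [LinearMap.sub_apply, LinearMap.smul_apply, Module.End.one_apply, LinearMap.map_sub,
        LinearMap.map_smul, hπ]
  have key3 : ∀ (k : ℕ) (v : V), ψ (((f - μ • 1) ^ k) v) = (-μ) ^ k • ψ v := by
    intro k
    induction k with
    | zero => simp
    | succ k ih =>
      intro v
      rw [pow_succ, Module.End.mul_apply, ih]
      simp only [LinearMap.sub_apply, LinearMap.smul_apply, Module.End.one_apply, LinearMap.map_sub,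
        LinearMap.map_smul, hψ, zero_sub, smul_neg, ← smul_assoc, smul_eq_mul, pow_succ]
      rw [← neg_smul]
      ring_nf
  ext v
  rw [Module.End.mem_maxGenEigenspace]
  constructor
  · rintro ⟨k, hk⟩
    have hne : (-μ) ^ k ≠ 0 := pow_ne_zero _ (neg_ne_zero.mpr hμ)
    have hψv : ψ v = 0 := by
      have h3 := key3 k v
      rw [hk, map_zero] at h3
      rcases smul_eq_zero.mp h3.symm with h | h
      · exact absurd h hne
      · exact h
    refine ⟨π v, ?_, (hrec v hψv).symm⟩
    exact (Module.End.mem_maxGenEigenspace _ _ _).mpr ⟨k, by rw [← key2, hk, map_zero]⟩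
  · rintro ⟨w, hw, rfl⟩
    obtain ⟨k, hk⟩ := (Module.End.mem_maxGenEigenspace _ _ _).mp hw
    exact ⟨k, by rw [key1, hk, map_zero]⟩

/-- For mutually inverse endomorphisms, generalized eigenspaces correspond at reciprocal
eigenvalues. -/
lemma maxGen_inv_le (f g : Module.End ℂ V) (hgf : g * f = 1) (hfg : f * g = 1)
    {μ : ℂ} (hμ : μ ≠ 0) :
    f.maxGenEigenspace μ ≤ g.maxGenEigenspace μ⁻¹ := by
  intro v hv
  rw [Module.End.mem_maxGenEigenspace] at hv ⊢
  obtain ⟨k, hk⟩ := hv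
  have hcomm : Commute g (f - μ • 1) := by
    have h1 : Commute g f := by rw [Commute, SemiconjBy, hgf, hfg]
    exact h1.sub_right ((Commute.one_right g).smul_right μ)
  have hid : g - μ⁻¹ • 1 = (-μ⁻¹) • (g * (f - μ • 1)) := by
    rw [mul_sub, hgf, mul_smul_comm, mul_one, smul_sub, smul_smul, neg_mul,
      inv_mul_cancel₀ hμ]
    module
  refine ⟨k, ?_⟩
  rw [hid, smul_pow, hcomm.mul_pow, LinearMap.smul_apply, Module.End.mul_apply, hk]
  simp

end Aux

lemma inv_re_neg_of_re_neg {μ : ℂ} (h : μ.re < 0) : (μ⁻¹).re < 0 := by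
  have hμ : μ ≠ 0 := by
    intro h0
    rw [h0] at h
    simp at h
  rw [Complex.inv_re]
  exact div_neg_of_neg_of_pos h (Complex.normSq_pos.mpr hμ)

lemma ne_zero_of_re_neg {μ : ℂ} (h : μ.re < 0) : μ ≠ 0 := by
  intro h0
  rw [h0] at h
  simp at h

/-- Mutually inverse matrices have the same stable subspace. -/
lemma stableSubspace_inv {ι : Type} [Fintype ι] [DecidableEq ι] (M : Matrix ι ι ℂ)
    (hM : IsUnit M.det) : stableSubspace M⁻¹ = stableSubspace M := by
  have h1 : M.mulVecLin * (M⁻¹).mulVecLin = 1 := by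
    rw [Module.End.mul_eq_comp, ← Matrix.mulVecLin_mul, Matrix.mul_nonsing_inv _ hM,
      Matrix.mulVecLin_one]
    rfl
  have h2 : (M⁻¹).mulVecLin * M.mulVecLin = 1 := by
    rw [Module.End.mul_eq_comp, ← Matrix.mulVecLin_mul, Matrix.nonsing_inv_mul _ hM,
      Matrix.mulVecLin_one]
    rfl
  apply le_antisymm
  · rw [stableSubspace, stableSubspace]
    refine iSup₂_le fun μ h => ?_
    refine le_trans (maxGen_inv_le (M⁻¹).mulVecLin M.mulVecLin h1 h2
      (ne_zero_of_re_neg h)) ?_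
    exact le_iSup₂ (f := fun μ _ => Module.End.maxGenEigenspace M.mulVecLin μ) μ⁻¹
      (inv_re_neg_of_re_neg h)
  · rw [stableSubspace, stableSubspace]
    refine iSup₂_le fun μ h => ?_
    refine le_trans (maxGen_inv_le M.mulVecLin (M⁻¹).mulVecLin h2 h1
      (ne_zero_of_re_neg h)) ?_
    exact le_iSup₂ (f := fun μ _ => Module.End.maxGenEigenspace (M⁻¹).mulVecLin μ) μ⁻¹
      (inv_re_neg_of_re_neg h)

/-- With `A = [[A11,A12],[A21,A22]]` invertible, `A11` invertible,
`B = [[0,0],[0,B22]]`, `B22` invertible, and `G = B22⁻¹(A22 − A21A11⁻¹A12)`, the stable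
subspace of `A⁻¹B` is the image of the stable subspace of `G` under `r ↦ (−A11⁻¹A12 r, r)`;
in particular the two stable subspaces have the same dimension. -/
theorem stmt_3 {m n : Type} [Fintype m] [Fintype n] [DecidableEq m] [DecidableEq n]
    (A11 : Matrix m m ℂ) (A12 : Matrix m n ℂ) (A21 : Matrix n m ℂ) (A22 B22 : Matrix n n ℂ)
    (hA11 : IsUnit A11.det) (hB22 : IsUnit B22.det)
    (hA : IsUnit (fromBlocks A11 A12 A21 A22).det) :
    stableSubspace ((fromBlocks A11 A12 A21 A22)⁻¹ * fromBlocks 0 0 0 B22)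
      = Submodule.map
          (((LinearEquiv.sumArrowLequivProdArrow m n ℂ ℂ).symm.toLinearMap).comp
            (LinearMap.prod (-(A11⁻¹ * A12)).mulVecLin LinearMap.id))
          (stableSubspace (B22⁻¹ * (A22 - A21 * A11⁻¹ * A12)))
    ∧ Module.finrank ℂ
          (stableSubspace ((fromBlocks A11 A12 A21 A22)⁻¹ * fromBlocks 0 0 0 B22))
        = Module.finrank ℂ (stableSubspace (B22⁻¹ * (A22 - A21 * A11⁻¹ * A12))) := by
  classical
  set C := A11⁻¹ * A12 with hC
  set S := A22 - A21 * A11⁻¹ * A12 with hSdef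
  set G := B22⁻¹ * S with hGdef
  set Φ : (n → ℂ) →ₗ[ℂ] (m ⊕ n → ℂ) :=
    (((LinearEquiv.sumArrowLequivProdArrow m n ℂ ℂ).symm.toLinearMap).comp
      (LinearMap.prod (-C).mulVecLin LinearMap.id)) with hΦdef
  haveI : Invertible A11 := A11.invertibleOfIsUnitDet hA11
  -- Schur complement is invertible
  have hS : IsUnit S.det := by
    have hdet := Matrix.det_fromBlocks₁₁ A11 A12 A21 A22
    rw [invOf_eq_nonsing_inv] at hdet
    rw [hdet] at hA
    have : A22 - A21 * A11⁻¹ * A12 = S := by rw [hSdef]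
    rw [this] at hA
    exact isUnit_of_mul_isUnit_right hA
  have hG : IsUnit G.det := by
    rw [hGdef, Matrix.det_mul]
    exact (Matrix.isUnit_nonsing_inv_det _ hB22).mul hS
  haveI : Invertible S := S.invertibleOfIsUnitDet hS
  haveI : Invertible (fromBlocks A11 A12 A21 A22) :=
    (fromBlocks A11 A12 A21 A22).invertibleOfIsUnitDet hA
  have hGinv : G⁻¹ = S⁻¹ * B22 := by
    rw [hGdef, Matrix.mul_inv_rev, Matrix.nonsing_inv_nonsing_inv _ hB22]
  -- explicit form of A⁻¹ B
  have hMform : (fromBlocks A11 A12 A21 A22)⁻¹ * fromBlocks 0 0 0 B22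
      = fromBlocks (0 : Matrix m m ℂ) (-(C * G⁻¹)) (0 : Matrix n m ℂ) G⁻¹ := by
    have h1 : fromBlocks A11 A12 A21 A22 * fromBlocks (0 : Matrix m m ℂ) (-(C * G⁻¹)) (0 : Matrix n m ℂ) G⁻¹
        = fromBlocks 0 0 0 B22 := by
      rw [fromBlocks_multiply]
      have e12 : A11 * -(C * G⁻¹) + A12 * G⁻¹ = 0 := by
        rw [hC, Matrix.mul_assoc A11⁻¹, Matrix.mul_neg, Matrix.mul_inv_cancel_left_of_invertible]
        exact neg_add_cancel _
      have e22 : A21 * -(C * G⁻¹) + A22 * G⁻¹ = B22 := by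
        have hx : A21 * (C * G⁻¹) = A21 * C * G⁻¹ := (Matrix.mul_assoc _ _ _).symm
        rw [Matrix.mul_neg, neg_add_eq_sub, hx, ← Matrix.sub_mul]
        have hy : A22 - A21 * C = S := by rw [hC, hSdef, Matrix.mul_assoc]
        rw [hy, hGinv, Matrix.mul_inv_cancel_left_of_invertible]
      simp only [Matrix.mul_zero, add_zero, zero_add, e12, e22]
    calc (fromBlocks A11 A12 A21 A22)⁻¹ * fromBlocks 0 0 0 B22
        = (fromBlocks A11 A12 A21 A22)⁻¹
            * (fromBlocks A11 A12 A21 A22 * fromBlocks (0 : Matrix m m ℂ) (-(C * G⁻¹)) (0 : Matrix n m ℂ) G⁻¹) := by rw [h1]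
      _ = fromBlocks (0 : Matrix m m ℂ) (-(C * G⁻¹)) (0 : Matrix n m ℂ) G⁻¹ := by
          rw [Matrix.inv_mul_cancel_left_of_invertible]
  -- pointwise description of Φ
  have hΦ : ∀ (r : n → ℂ), Φ r = Sum.elim ((-C) *ᵥ r) r := by
    intro r
    funext x
    cases x with
    | inl a =>
      simp [hΦdef, LinearEquiv.sumArrowLequivProdArrow, Matrix.neg_mulVec]
    | inr b =>
      simp [hΦdef, LinearEquiv.sumArrowLequivProdArrow]
  -- projections
  set π : (m ⊕ n → ℂ) →ₗ[ℂ] (n → ℂ) := LinearMap.funLeft ℂ ℂ Sum.inr with hπdef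
  set ψ : (m ⊕ n → ℂ) →ₗ[ℂ] (m → ℂ) :=
    LinearMap.funLeft ℂ ℂ Sum.inl + C.mulVecLin.comp (LinearMap.funLeft ℂ ℂ Sum.inr)
    with hψdef
  set Mb := fromBlocks (0 : Matrix m m ℂ) (-(C * G⁻¹)) (0 : Matrix n m ℂ) G⁻¹ with hMb
  have hfφ : ∀ r, Mb.mulVecLin (Φ r) = Φ ((G⁻¹).mulVecLin r) := by
    intro r
    rw [hΦ, hΦ]
    simp only [Matrix.mulVecLin_apply, hMb, fromBlocks_mulVec, Sum.elim_comp_inl,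
      Sum.elim_comp_inr, Matrix.zero_mulVec, zero_add, Matrix.neg_mulVec,
      ← Matrix.mulVec_mulVec]
  have hπM : ∀ v, π (Mb.mulVecLin v) = (G⁻¹).mulVecLin (π v) := by
    intro v
    simp only [hπdef, LinearMap.funLeft_apply, Matrix.mulVecLin_apply, hMb,
      fromBlocks_mulVec]
    funext x
    simp [Matrix.zero_mulVec, mulVec, Function.comp, LinearMap.funLeft]
  have hψM : ∀ v, ψ (Mb.mulVecLin v) = 0 := by
    intro v
    simp only [hψdef, LinearMap.add_apply, LinearMap.comp_apply, LinearMap.funLeft_apply,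
      Matrix.mulVecLin_apply, hMb, fromBlocks_mulVec]
    funext x
    simp [Matrix.zero_mulVec, Matrix.neg_mulVec, ← Matrix.mulVec_mulVec, Function.comp, LinearMap.funLeft]
  have hrec : ∀ v, ψ v = 0 → v = Φ (π v) := by
    intro v hv
    rw [hΦ]
    funext x
    cases x with
    | inl a =>
      have h1 : v (Sum.inl a) + (C *ᵥ (v ∘ Sum.inr)) a = 0 := congrFun hv a
      show v (Sum.inl a) = ((-C) *ᵥ (v ∘ Sum.inr)) a
      rw [Matrix.neg_mulVec, Pi.neg_apply]
      linear_combination h1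
    | inr b => rfl
  have hinj : Function.Injective Φ := by
    intro r s h
    rw [hΦ r, hΦ s] at h
    exact funext fun x => congrFun h (Sum.inr x)
  rw [hMform]
  have hmain : stableSubspace Mb = Submodule.map Φ (stableSubspace G) := by
    have hstep : stableSubspace Mb = Submodule.map Φ (stableSubspace G⁻¹) := by
      rw [stableSubspace, stableSubspace, Submodule.map_iSup]
      refine iSup_congr fun μ => ?_
      rw [Submodule.map_iSup]
      refine iSup_congr fun h => ?_
      exact maxGen_map_eq Mb.mulVecLin (G⁻¹).mulVecLin Φ π ψ hfφ hπM hψM hrec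
        (ne_zero_of_re_neg h)
    rw [hstep, stableSubspace_inv G hG]
  refine ⟨hmain, ?_⟩
  rw [hmain]
  exact (LinearEquiv.finrank_eq (Submodule.equivMapOfInjective Φ hinj _)).symm
end

section
/- Let A be an N×N Hermitian invertible matrix with exactly p negative and N−p positive eigenvalues (counted with multiplicity), and let B be an N×N matrix whose real part is positive definite. Then A^{-1}B has exactly p eigenvalues (counted with algebraic multiplicity) with negative real part and N−p with positive real part. -/
open Matrix Polynomial
open scoped ComplexOrder

noncomputable section Stmt5Aux

open Module

/-- The sesquilinear form attached to a matrix. -/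
private def mh {N : ℕ} (A : Matrix (Fin N) (Fin N) ℂ) :
    (Fin N → ℂ) →ₗ⋆[ℂ] (Fin N → ℂ) →ₗ[ℂ] ℂ :=
  LinearMap.mk₂'ₛₗ (starRingEnd ℂ) (RingHom.id ℂ)
    (fun x y => dotProduct (star x) (A.mulVec y))
    (fun x x' y => by simp [star_add, add_dotProduct])
    (fun c x y => by
      simp [star_smul, smul_dotProduct, smul_eq_mul])
    (fun x y y' => by simp [Matrix.mulVec_add, dotProduct_add])
    (fun c x y => by simp [Matrix.mulVec_smul, dotProduct_smul, smul_eq_mul])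

private lemma mh_apply {N : ℕ} (A : Matrix (Fin N) (Fin N) ℂ) (x y : Fin N → ℂ) :
    mh A x y = dotProduct (star x) (A.mulVec y) := rfl

/-- Restriction of a sesquilinear form to a submodule. -/
private def sesqRestrict {V : Type*} [AddCommGroup V] [Module ℂ V]
    (h : V →ₗ⋆[ℂ] V →ₗ[ℂ] ℂ) (W : Submodule ℂ V) : W →ₗ⋆[ℂ] W →ₗ[ℂ] ℂ :=
  LinearMap.mk₂'ₛₗ (starRingEnd ℂ) (RingHom.id ℂ)
    (fun x y => h x y)
    (fun x x' y => by simp)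
    (fun c x y => by simp)
    (fun x y y' => by simp)
    (fun c x y => by simp)

private lemma sesqRestrict_apply {V : Type*} [AddCommGroup V] [Module ℂ V]
    (h : V →ₗ⋆[ℂ] V →ₗ[ℂ] ℂ) (W : Submodule ℂ V) (x y : W) :
    sesqRestrict h W x y = h x y := rfl

/-- Algebraic Lyapunov-type inertia lemma: if every eigenvalue of `T` has negative real
part, `h` is a hermitian sesquilinear form and `h (T x) x + h x (T x)` has positive real
part for all `x ≠ 0`, then `h` is negative definite. -/
private lemma lyap : ∀ (n : ℕ) {V : Type} [AddCommGroup V] [Module ℂ V]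
    [FiniteDimensional ℂ V], finrank ℂ V = n →
    ∀ (T : Module.End ℂ V) (h : V →ₗ⋆[ℂ] V →ₗ[ℂ] ℂ),
    (∀ x y, star (h x y) = h y x) →
    (∀ x, x ≠ 0 → 0 < (h (T x) x + h x (T x)).re) →
    (∀ μ : ℂ, Module.End.HasEigenvalue T μ → μ.re < 0) →
    ∀ x, x ≠ 0 → (h x x).re < 0 := by
  intro n
  induction n using Nat.strong_induction_on with
  | _ n IH =>
  intro V _ _ _ hn T h hsymm hpos heig x hx
  have hnt : Nontrivial V := ⟨⟨x, 0, hx⟩⟩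
  have hre : ∀ y : V, (h y y).im = 0 := by
    intro y
    have h1 := hsymm y y
    rw [Complex.star_def, Complex.conj_eq_iff_im] at h1
    exact h1
  obtain ⟨μ, hμ⟩ := Module.End.exists_eigenvalue T
  obtain ⟨v, hv⟩ := hμ.exists_hasEigenvector
  have hv0 : v ≠ 0 := hv.right
  have hTv : T v = μ • v := hv.apply_eq_smul
  have hμre : μ.re < 0 := heig μ hμ
  have hr : (h v v).re < 0 := by
    have h1 := hpos v hv0
    simp only [hTv, map_smulₛₗ, LinearMap.smul_apply, _root_.map_smul,
      RingHom.id_apply] at h1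
    have h2 : ((starRingEnd ℂ μ) • h v v + μ • h v v).re = 2 * μ.re * (h v v).re := by
      simp only [smul_eq_mul, Complex.add_re, Complex.mul_re, Complex.conj_re,
        Complex.conj_im, hre v, mul_zero, sub_zero]
      ring
    rw [h2] at h1
    nlinarith [h1, hμre]
  have hvvne : h v v ≠ 0 := by
    intro e; rw [e] at hr; simp at hr
  set W := LinearMap.ker (h v) with hWdef
  have hvW : v ∉ W := by
    simpa [hWdef, LinearMap.mem_ker] using hvvne
  have hWlt : finrank ℂ W < n := by
    rw [← hn]
    exact Submodule.finrank_lt (fun e => hvW (e ▸ Submodule.mem_top))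
  have hmem : ∀ u : V, u - (h v u / h v v) • v ∈ W := by
    intro u
    simp only [hWdef, LinearMap.mem_ker, map_sub, _root_.map_smul, smul_eq_mul]
    field_simp
    simp
  let T' : Module.End ℂ W :=
    { toFun := fun w => ⟨T w - (h v (T w) / h v v) • v, hmem (T w)⟩
      map_add' := by
        intro a b
        apply Subtype.ext
        simp only [Submodule.coe_add, map_add, Submodule.coe_mk]
        rw [add_div, add_smul]
        abel
      map_smul' := by
        intro c a
        apply Subtype.ext
        simp only [Submodule.coe_smul, _root_.map_smul, RingHom.id_apply, smul_eq_mul]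
        rw [smul_sub, mul_div_assoc, mul_smul] }
  have hT'apply : ∀ w : W, (T' w : V) = T w - (h v (T w) / h v v) • v := fun w => rfl
  have hsymm' : ∀ a b : W, star (sesqRestrict h W a b) = sesqRestrict h W b a :=
    fun a b => hsymm a b
  have hker : ∀ w : W, h v (w : V) = 0 := fun w => LinearMap.mem_ker.mp w.2
  have hpos' : ∀ w : W, w ≠ 0 →
      0 < ((sesqRestrict h W) (T' w) w + (sesqRestrict h W) w (T' w)).re := by
    intro w hw0
    have hw0' : (w : V) ≠ 0 := fun e => hw0 (Subtype.ext e)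
    have e1 : (sesqRestrict h W) (T' w) w = h (T (w : V)) w := by
      rw [sesqRestrict_apply, hT'apply, map_sub, LinearMap.sub_apply, map_smulₛₗ,
        LinearMap.smul_apply, hker w]
      simp
    have e2 : (sesqRestrict h W) w (T' w) = h (w : V) (T (w : V)) := by
      rw [sesqRestrict_apply, hT'apply, map_sub, _root_.map_smul]
      have hbv : h (w : V) v = 0 := by rw [← hsymm v w, hker w, star_zero]
      simp [hbv]
    rw [e1, e2]
    exact hpos w hw0'
  have heig' : ∀ ν : ℂ, Module.End.HasEigenvalue T' ν → ν.re < 0 := by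
    intro ν hν
    obtain ⟨w, hw⟩ := hν.exists_hasEigenvector
    have hw0 : (w : V) ≠ 0 := fun e => hw.right (Subtype.ext e)
    have hTw : T (w : V) - (h v (T (w : V)) / h v v) • v = ν • (w : V) := by
      have h3 := hw.apply_eq_smul
      have := congrArg (Subtype.val) h3
      simpa [hT'apply] using this
    set c := h v (T (w : V)) / h v v with hc
    by_cases hνμ : ν = μ
    · exact hνμ ▸ hμre
    · have hTw' : T (w : V) = ν • (w : V) + c • v := by
        rw [← hTw]; abel
      set u := (w : V) + (c / (ν - μ)) • v with hu
      have hu0 : u ≠ 0 := by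
        intro e
        have h4 : h v u = 0 := by rw [e, map_zero]
        rw [hu, map_add, _root_.map_smul, hker w, zero_add, smul_eq_mul] at h4
        rcases mul_eq_zero.mp h4 with h5 | h5
        · rw [hu, h5, zero_smul, add_zero] at e
          exact hw0 e
        · exact hvvne h5
      have hTu : T u = ν • u := by
        rw [hu, map_add, _root_.map_smul, hTv, hTw', smul_smul, smul_add, smul_smul,
          add_assoc, ← add_smul]
        congr 2
        field_simp [sub_ne_zero.mpr hνμ]
        ring
      exact heig ν (Module.End.hasEigenvalue_of_hasEigenvector
        ⟨Module.End.mem_eigenspace_iff.mpr hTu, hu0⟩)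
  have hneg : ∀ w : W, w ≠ 0 → ((sesqRestrict h W) w w).re < 0 :=
    IH (finrank ℂ W) hWlt rfl T' (sesqRestrict h W) hsymm' hpos' heig'
  -- decompose x
  set a := h v x / h v v with ha
  have hxw : x - a • v ∈ W := hmem x
  set w : V := x - a • v with hwdef
  have hx' : a • v + w = x := by rw [hwdef]; abel
  have hvw0 : h v w = 0 := LinearMap.mem_ker.mp hxw
  have hwv0 : h w v = 0 := by rw [← hsymm v w, hvw0, star_zero]
  have hexp : h x x = star a * a * h v v + h w w := by
    conv_lhs => rw [← hx']
    simp only [map_add, LinearMap.add_apply, map_smulₛₗ, LinearMap.smul_apply,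
      _root_.map_smul, smul_eq_mul, hvw0, hwv0, Complex.star_def, mul_zero, add_zero,
      zero_add, RingHom.id_apply]
    ring
  have hnsq : star a * a = (Complex.normSq a : ℂ) := by
    rw [Complex.star_def, Complex.normSq_eq_conj_mul_self]
  have hrexp : (h x x).re = Complex.normSq a * (h v v).re + (h w w).re := by
    rw [hexp, hnsq, Complex.add_re, Complex.re_ofReal_mul]
  by_cases hw0 : w = 0
  · have ha0 : a ≠ 0 := by
      intro e
      rw [← hx', e, hw0, zero_smul, add_zero] at hx
      exact hx rfl
    have : 0 < Complex.normSq a := Complex.normSq_pos.mpr ha0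
    rw [hrexp, hw0]
    simp only [map_zero, Complex.zero_re, add_zero]
    exact mul_neg_of_pos_of_neg this hr
  · have h6 : ((sesqRestrict h W) ⟨w, hxw⟩ ⟨w, hxw⟩).re < 0 :=
      hneg ⟨w, hxw⟩ (fun e => hw0 (by simpa using congrArg Subtype.val e))
    rw [sesqRestrict_apply] at h6
    rw [hrexp]
    nlinarith [Complex.normSq_nonneg a, hr, h6]

private lemma charpoly_sub_smul_one {N : ℕ} (M : Matrix (Fin N) (Fin N) ℂ) (μ : ℂ) :
    (M - μ • 1).charpoly = M.charpoly.comp (X + C μ) := by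
  rw [comp_eq_aeval, Matrix.charpoly, Matrix.charpoly, AlgHom.map_det]
  congr 1
  ext i j
  by_cases hij : i = j
  · subst hij
    simp [charmatrix_apply_eq, Matrix.one_apply, Matrix.sub_apply, Matrix.smul_apply,
      map_sub, aeval_X, aeval_C]
    ring
  · simp [charmatrix_apply_ne _ _ _ hij, Matrix.one_apply, hij, Matrix.sub_apply,
      Matrix.smul_apply]


private lemma eval_charpoly' {N : ℕ} (M : Matrix (Fin N) (Fin N) ℂ) (μ : ℂ) :
    M.charpoly.eval μ = (μ • 1 - M).det := by
  rw [Matrix.charpoly, ← Polynomial.coe_evalRingHom, RingHom.map_det]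
  congr 1
  ext i j
  by_cases hij : i = j
  · subst hij
    simp [charmatrix_apply_eq, Matrix.one_apply, Matrix.sub_apply, Matrix.smul_apply]
  · simp [charmatrix_apply_ne _ _ _ hij, Matrix.one_apply, hij, Matrix.sub_apply,
      Matrix.smul_apply]


/-- dimension of generalized eigenspace = algebraic multiplicity -/
private lemma charpoly_mulVecLin {N : ℕ} (M : Matrix (Fin N) (Fin N) ℂ) :
    LinearMap.charpoly (M.mulVecLin) = M.charpoly := by
  rw [← Matrix.toLin'_apply', ← LinearMap.charpoly_toMatrix (Matrix.toLin' M)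
    (Pi.basisFun ℂ (Fin N)), LinearMap.toMatrix_eq_toMatrix', LinearMap.toMatrix'_toLin']

private lemma finrank_maxGen_eq_rootMultiplicity {N : ℕ} (M : Matrix (Fin N) (Fin N) ℂ)
    (μ : ℂ) :
    finrank ℂ (Module.End.maxGenEigenspace M.mulVecLin μ) = M.charpoly.rootMultiplicity μ := by
  have hml : (M - μ • 1).mulVecLin = M.mulVecLin - μ • 1 := by
    ext x i
    simp [Matrix.sub_mulVec, Matrix.smul_mulVec, Matrix.one_mulVec, Module.End.one_apply,
      Matrix.one_apply, Pi.single_apply, eq_comm]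
  have h1 : Module.End.maxGenEigenspace M.mulVecLin μ
      = Module.End.maxGenEigenspace ((M - μ • 1).mulVecLin) 0 := by
    rw [hml]
    ext x
    simp [Module.End.mem_maxGenEigenspace, sub_zero, zero_smul]
  rw [h1, LinearMap.finrank_maxGenEigenspace_zero_eq, charpoly_mulVecLin, charpoly_sub_smul_one,
    rootMultiplicity_eq_natTrailingDegree]




private lemma finrank_biSup_eq_sum {V : Type*} [AddCommGroup V] [Module ℂ V]
    [FiniteDimensional ℂ V] {ι : Type*} [DecidableEq ι] {p : ι → Submodule ℂ V}
    (hp : iSupIndep p) (s : Finset ι) :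
    finrank ℂ (⨆ i ∈ s, p i : Submodule ℂ V) = ∑ i ∈ s, finrank ℂ (p i) := by
  classical
  induction s using Finset.induction_on with
  | empty => simp
  | @insert a s ha ih =>
    rw [Finset.iSup_insert, Finset.sum_insert ha, ← ih]
    have hd : Disjoint (p a) (⨆ i ∈ s, p i) := hp.disjoint_biSup ha
    have h2 := Submodule.finrank_sup_add_finrank_inf_eq (p a) (⨆ i ∈ s, p i)
    rw [disjoint_iff.mp hd] at h2
    simp only [finrank_bot, add_zero] at h2
    omega





private lemma mh_herm {N : ℕ} {A : Matrix (Fin N) (Fin N) ℂ} (hA : A.IsHermitian) :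
    ∀ x y : Fin N → ℂ, star (mh A x y) = mh A y x := by
  intro x y
  rw [mh_apply, mh_apply, Matrix.star_dotProduct, star_star, Matrix.star_mulVec,
    ← Matrix.dotProduct_mulVec, Matrix.IsHermitian.eq hA]

private lemma lyap_on {V : Type} [AddCommGroup V] [Module ℂ V] [FiniteDimensional ℂ V]
    (T : Module.End ℂ V) (h : V →ₗ⋆[ℂ] V →ₗ[ℂ] ℂ)
    (hsymm : ∀ x y, star (h x y) = h y x)
    (hpos : ∀ x, x ≠ 0 → 0 < (h (T x) x + h x (T x)).re)
    (W : Submodule ℂ V) (hinv : ∀ x ∈ W, T x ∈ W)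
    (heig : ∀ (ν : ℂ) (w : V), w ∈ W → w ≠ 0 → T w = ν • w → ν.re < 0) :
    ∀ x ∈ W, x ≠ 0 → (h x x).re < 0 := by
  intro x hxW hx0
  have key := lyap (finrank ℂ W) rfl (T.restrict hinv) (sesqRestrict h W)
    (fun a b => hsymm a b)
    (fun w hw0 => by
      have hw0' : (w : V) ≠ 0 := fun e => hw0 (Subtype.ext e)
      have e1 : ((sesqRestrict h W) ((T.restrict hinv) w)) w = h (T (w : V)) w := by
        rw [sesqRestrict_apply, LinearMap.restrict_coe_apply]
      have e2 : ((sesqRestrict h W) w) ((T.restrict hinv) w) = h (w : V) (T (w : V)) := by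
        rw [sesqRestrict_apply, LinearMap.restrict_coe_apply]
      rw [e1, e2]; exact hpos w hw0')
    (fun ν hν => by
      obtain ⟨w, hw⟩ := hν.exists_hasEigenvector
      have hw0 : (w : V) ≠ 0 := fun e => hw.right (Subtype.ext e)
      have h4 := congrArg Subtype.val hw.apply_eq_smul
      rw [LinearMap.restrict_coe_apply] at h4
      exact heig ν w w.2 hw0 h4)
  have h5 := key ⟨x, hxW⟩ (fun e => hx0 (by simpa using congrArg Subtype.val e))
  rwa [sesqRestrict_apply] at h5

private lemma lyap_on_pos {V : Type} [AddCommGroup V] [Module ℂ V] [FiniteDimensional ℂ V]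
    (T : Module.End ℂ V) (h : V →ₗ⋆[ℂ] V →ₗ[ℂ] ℂ)
    (hsymm : ∀ x y, star (h x y) = h y x)
    (hpos : ∀ x, x ≠ 0 → 0 < (h (T x) x + h x (T x)).re)
    (W : Submodule ℂ V) (hinv : ∀ x ∈ W, T x ∈ W)
    (heig : ∀ (ν : ℂ) (w : V), w ∈ W → w ≠ 0 → T w = ν • w → 0 < ν.re) :
    ∀ x ∈ W, x ≠ 0 → 0 < (h x x).re := by
  intro x hxW hx0
  have key := lyap_on (-T) (-h)
    (fun a b => by
      simp only [LinearMap.neg_apply, star_neg, hsymm])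
    (fun y hy0 => by
      simp only [LinearMap.neg_apply, map_neg, neg_neg]
      exact hpos y hy0)
    W
    (fun y hy => by
      have := W.neg_mem (hinv y hy)
      simpa using this)
    (fun ν w hwW hw0 hTw => by
      have hTw' : T w = (-ν) • w := by
        have : -(T w) = ν • w := by simpa using hTw
        rw [neg_smul, ← this, neg_neg]
      have := heig (-ν) w hwW hw0 hTw'
      have hνre : 0 < (-ν).re := this
      rw [Complex.neg_re] at hνre
      linarith)
    x hxW hx0
  simp only [LinearMap.neg_apply, Complex.neg_re] at key
  linarith

private lemma root_iff_ev {N : ℕ} (M : Matrix (Fin N) (Fin N) ℂ) (μ : ℂ) :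
    M.charpoly.IsRoot μ ↔ ∃ v, v ≠ 0 ∧ M *ᵥ v = μ • v := by
  constructor
  · intro hroot
    have hdet : (μ • 1 - M).det = 0 := by rw [← eval_charpoly']; exact hroot
    obtain ⟨v, hv0, hv⟩ := (Matrix.exists_mulVec_eq_zero_iff).mpr hdet
    refine ⟨v, hv0, ?_⟩
    rw [Matrix.sub_mulVec, sub_eq_zero, Matrix.smul_mulVec, Matrix.one_mulVec] at hv
    exact hv.symm
  · rintro ⟨v, hv0, hv⟩
    have h1 : (μ • 1 - M) *ᵥ v = 0 := by
      rw [Matrix.sub_mulVec, Matrix.smul_mulVec, Matrix.one_mulVec, hv, sub_self]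
    rw [IsRoot, eval_charpoly']
    exact Matrix.exists_mulVec_eq_zero_iff.mp ⟨v, hv0, h1⟩

private noncomputable def evec {N : ℕ} {A : Matrix (Fin N) (Fin N) ℂ} (hA : A.IsHermitian)
    (i : Fin N) : Fin N → ℂ := hA.eigenvectorBasis i

private lemma mh_spectral {N : ℕ} {A : Matrix (Fin N) (Fin N) ℂ} (hA : A.IsHermitian)
    (x : Fin N → ℂ) :
    (mh A x x).re = ∑ i, hA.eigenvalues i *
      Complex.normSq (dotProduct (star (evec hA i)) x) := by
  classical
  set E : Fin N → (Fin N → ℂ) := fun i => evec hA i with hE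
  have hEdef : ∀ i, E i = hA.eigenvectorBasis i := fun i => rfl
  set d : Fin N → ℂ := fun i => dotProduct (star (E i)) x with hd
  have hinner : ∀ i, (inner ℂ (hA.eigenvectorBasis i) (WithLp.toLp 2 x) : ℂ)
      = d i := by
    intro i
    rw [EuclideanSpace.inner_eq_star_dotProduct, dotProduct_comm]
    rfl
  have hsum : ∑ i, d i • E i = x := by
    have h0 := (hA.eigenvectorBasis).sum_repr' (WithLp.toLp 2 x)
    calc ∑ i, d i • E i = ∑ i, (inner ℂ (hA.eigenvectorBasis i)
          (WithLp.toLp 2 x) : ℂ) • E i := by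
          refine Finset.sum_congr rfl fun i _ => ?_
          rw [hinner i]
      _ = x := by
        have h1 := congrArg WithLp.ofLp h0
        simpa [WithLp.ofLp_sum, WithLp.ofLp_smul, hEdef] using h1
  have hAE : ∀ j, A *ᵥ E j = (hA.eigenvalues j : ℂ) • E j := by
    intro j
    have h1 := hA.mulVec_eigenvectorBasis j
    rw [hEdef j]
    refine h1.trans ?_
    ext k
    simp [Pi.smul_apply, Complex.real_smul]
  have horth : ∀ i j, dotProduct (star (E i)) (E j) = if i = j then 1 else 0 := by
    intro i j
    have h1 := orthonormal_iff_ite.mp (hA.eigenvectorBasis).orthonormal i j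
    rw [EuclideanSpace.inner_eq_star_dotProduct, dotProduct_comm] at h1
    exact h1
  have hEE : ∀ i j, mh A (E i) (E j) = if i = j then (hA.eigenvalues i : ℂ) else 0 := by
    intro i j
    rw [mh_apply, hAE j, dotProduct_smul, smul_eq_mul, horth i j]
    by_cases hij : i = j <;> simp [hij]
  have hexp : mh A x x = ∑ i, (starRingEnd ℂ) (d i) * (d i * (hA.eigenvalues i : ℂ)) := by
    conv_lhs => rw [← hsum]
    rw [map_sum]
    refine Finset.sum_congr rfl fun j _ => ?_
    rw [_root_.map_smul, smul_eq_mul, map_sum, LinearMap.sum_apply]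
    rw [Finset.sum_congr rfl (fun i _ => by
      rw [map_smulₛₗ, LinearMap.smul_apply, smul_eq_mul, hEE i j])]
    have hite : ∀ i : Fin N, (starRingEnd ℂ) (d i) * (if i = j then (hA.eigenvalues i : ℂ) else 0)
        = if i = j then (starRingEnd ℂ) (d i) * (hA.eigenvalues i : ℂ) else 0 := fun i => by
      by_cases hij : i = j <;> simp [hij]
    rw [Finset.sum_congr rfl fun i _ => hite i, Finset.sum_ite_eq' Finset.univ j
      (fun i => (starRingEnd ℂ) (d i) * (hA.eigenvalues i : ℂ))]
    simp only [Finset.mem_univ, if_true]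
    ring
  rw [hexp, Complex.re_sum]
  refine Finset.sum_congr rfl fun i _ => ?_
  rw [← mul_assoc, mul_comm ((starRingEnd ℂ) (d i)) (d i), Complex.mul_conj]
  rw [← Complex.ofReal_mul, Complex.ofReal_re, mul_comm]

end Stmt5Aux

/-- If `A` is Hermitian invertible with exactly `p` negative and `N − p` positive
eigenvalues, and `Re B` is positive definite, then `A⁻¹B` has exactly `p` eigenvalues (with
algebraic multiplicity, i.e. as roots of the characteristic polynomial) of negative real part
and `N − p` of positive real part. -/
theorem stmt_5 {N : ℕ} (p : ℕ) (A B : Matrix (Fin N) (Fin N) ℂ)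
    (hA : A.IsHermitian) (hAinv : IsUnit A.det)
    (hB : ((1 / 2 : ℂ) • (B + Bᴴ)).PosDef)
    (hneg : (Finset.univ.filter fun i => hA.eigenvalues i < 0).card = p)
    (hpos : (Finset.univ.filter fun i => 0 < hA.eigenvalues i).card = N - p) :
    ((A⁻¹ * B).charpoly.roots.filter fun μ => μ.re < 0).card = p
    ∧ ((A⁻¹ * B).charpoly.roots.filter fun μ => 0 < μ.re).card = N - p := by
  classical
  set M : Matrix (Fin N) (Fin N) ℂ := A⁻¹ * B with hMdef
  set f : Module.End ℂ (Fin N → ℂ) := M.mulVecLin with hfdef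
  have hdetA : A.det ≠ 0 := hAinv.ne_zero
  have hAval : ∀ i, hA.eigenvalues i ≠ 0 := by
    intro i h0
    apply hdetA
    rw [hA.det_eq_prod_eigenvalues]
    exact Finset.prod_eq_zero (Finset.mem_univ i) (by rw [h0]; norm_num)
  have hNsplit : p + (N - p) = N := by
    have hdisj : Disjoint (Finset.univ.filter fun i => hA.eigenvalues i < 0)
        (Finset.univ.filter fun i => 0 < hA.eigenvalues i) := by
      rw [Finset.disjoint_left]
      intro i h1 h2
      have h1' := (Finset.mem_filter.mp h1).2
      have h2' := (Finset.mem_filter.mp h2).2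
      linarith
    have hunion : (Finset.univ.filter fun i => hA.eigenvalues i < 0)
        ∪ (Finset.univ.filter fun i => 0 < hA.eigenvalues i) = Finset.univ := by
      ext i
      simp only [Finset.mem_union, Finset.mem_filter, Finset.mem_univ, true_and, iff_true]
      exact (hAval i).lt_or_gt
    have hcu := Finset.card_union_of_disjoint hdisj
    rw [hunion, Finset.card_univ, Fintype.card_fin, hneg, hpos] at hcu
    omega
  -- the sesquilinear form of A
  have hsym := mh_herm hA
  have hform : ∀ x : Fin N → ℂ, x ≠ 0 → 0 < ((mh A) (f x) x + (mh A) x (f x)).re := by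
    intro x hx
    have e1 : (mh A) (f x) x = dotProduct (star x) (Bᴴ *ᵥ x) := by
      rw [mh_apply, hfdef, Matrix.mulVecLin_apply, Matrix.star_mulVec,
        ← Matrix.dotProduct_mulVec, Matrix.mulVec_mulVec]
      congr 2
      rw [hMdef, Matrix.conjTranspose_mul, Matrix.conjTranspose_nonsing_inv, hA.eq,
        Matrix.mul_assoc, Matrix.nonsing_inv_mul A hAinv, Matrix.mul_one]
    have e2 : (mh A) x (f x) = dotProduct (star x) (B *ᵥ x) := by
      rw [mh_apply, hfdef, Matrix.mulVecLin_apply, Matrix.mulVec_mulVec, hMdef,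
        ← Matrix.mul_assoc, Matrix.mul_nonsing_inv A hAinv, Matrix.one_mul]
    have e3 : (mh A) (f x) x + (mh A) x (f x)
        = 2 * dotProduct (star x) ((((1 : ℂ)/2) • (B + Bᴴ)) *ᵥ x) := by
      rw [e1, e2, Matrix.smul_mulVec, dotProduct_smul, Matrix.add_mulVec,
        dotProduct_add]
      rw [smul_eq_mul]
      ring
    rw [e3]
    have hq := hB.dotProduct_mulVec_pos hx
    rw [Complex.lt_def] at hq
    have hq1 : 0 < (dotProduct (star x) ((((1:ℂ)/2) • (B + Bᴴ)) *ᵥ x)).re := by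
      simpa using hq.1
    set z := dotProduct (star x) ((((1:ℂ)/2) • (B + Bᴴ)) *ᵥ x) with hz
    have h2 : ((2:ℂ) * z).re = 2 * z.re := by simp [Complex.mul_re]
    rw [h2]
    linarith
  have hsign : ∀ (μ : ℂ) (v : Fin N → ℂ), v ≠ 0 → f v = μ • v
      → 0 < μ.re * ((mh A) v v).re := by
    intro μ v hv0 hMv
    have h1 := hform v hv0
    rw [hMv] at h1
    have him : ((mh A) v v).im = 0 := by
      have h2 := hsym v v
      rw [Complex.star_def, Complex.conj_eq_iff_im] at h2
      exact h2
    have h2 : ((mh A) (μ • v) v + (mh A) v (μ • v)).re = 2 * (μ.re * ((mh A) v v).re) := by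
      rw [map_smulₛₗ, LinearMap.smul_apply, _root_.map_smul]
      simp only [smul_eq_mul, Complex.add_re, Complex.mul_re, Complex.conj_re,
        Complex.conj_im, RingHom.id_apply, him, mul_zero, sub_zero]
      ring
    rw [h2] at h1
    linarith
  -- roots
  have hmon := M.charpoly_monic
  have hdeg : M.charpoly.natDegree = N := by
    rw [Matrix.charpoly_natDegree_eq_dim, Fintype.card_fin]
  have hcardroots : M.charpoly.roots.card = N := by
    have h1 := Polynomial.splits_iff_card_roots.mp (IsAlgClosed.splits M.charpoly)
    rw [hdeg] at h1
    exact h1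
  have hrootev : ∀ μ ∈ M.charpoly.roots, ∃ v, v ≠ 0 ∧ f v = μ • v := by
    intro μ hμ
    obtain ⟨v, hv0, hv⟩ := (root_iff_ev M μ).mp (Polynomial.isRoot_of_mem_roots hμ)
    exact ⟨v, hv0, by rw [hfdef]; simpa [Matrix.mulVecLin_apply] using hv⟩
  have hrootne : ∀ μ ∈ M.charpoly.roots, μ.re ≠ 0 := by
    intro μ hμ h0
    obtain ⟨v, hv0, hv⟩ := hrootev μ hμ
    have h1 := hsign μ v hv0 hv
    rw [h0, zero_mul] at h1
    exact lt_irrefl 0 h1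
  -- filtered counts as sums of multiplicities
  have hfilt : ∀ (q : ℂ → Prop) (_ : DecidablePred q),
      (M.charpoly.roots.filter q).card
        = ∑ μ ∈ M.charpoly.roots.toFinset.filter q, M.charpoly.rootMultiplicity μ := by
    intro q _
    rw [← Multiset.toFinset_sum_count_eq (M.charpoly.roots.filter q),
      Multiset.toFinset_filter]
    refine Finset.sum_congr rfl fun μ hμ => ?_
    rw [Multiset.count_filter_of_pos (Finset.mem_filter.mp hμ).2, Polynomial.count_roots]
  set Sm := M.charpoly.roots.toFinset.filter (fun μ => μ.re < 0) with hSm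
  set Sp := M.charpoly.roots.toFinset.filter (fun μ => 0 < μ.re) with hSp
  set Vm := (⨆ μ ∈ Sm, Module.End.maxGenEigenspace f μ) with hVm
  set Vp := (⨆ μ ∈ Sp, Module.End.maxGenEigenspace f μ) with hVp
  have hdimVm : Module.finrank ℂ Vm = (M.charpoly.roots.filter (fun μ => μ.re < 0)).card := by
    rw [hfilt _ inferInstance, hVm,
      finrank_biSup_eq_sum (Module.End.independent_maxGenEigenspace f)]
    exact Finset.sum_congr rfl fun μ _ => finrank_maxGen_eq_rootMultiplicity M μ
  have hdimVp : Module.finrank ℂ Vp = (M.charpoly.roots.filter (fun μ => 0 < μ.re)).card := by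
    rw [hfilt _ inferInstance, hVp,
      finrank_biSup_eq_sum (Module.End.independent_maxGenEigenspace f)]
    exact Finset.sum_congr rfl fun μ _ => finrank_maxGen_eq_rootMultiplicity M μ
  -- invariance
  have hinvS : ∀ (S : Finset ℂ), ∀ x ∈ (⨆ μ ∈ S, Module.End.maxGenEigenspace f μ),
      f x ∈ (⨆ μ ∈ S, Module.End.maxGenEigenspace f μ) := by
    intro S x hx
    refine Submodule.iSup_induction (motive := fun y => f y ∈ (⨆ μ ∈ S, Module.End.maxGenEigenspace f μ))
      _ hx ?_ ?_ ?_
    · intro μ y hy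
      show f y ∈ ⨆ μ ∈ S, Module.End.maxGenEigenspace f μ
      by_cases hμ : μ ∈ S
      · rw [iSup_pos hμ] at hy
        have h2 : f y ∈ Module.End.maxGenEigenspace f μ :=
          Module.End.mapsTo_maxGenEigenspace_of_comm (Commute.refl f) μ hy
        exact Submodule.mem_iSup_of_mem μ (Submodule.mem_iSup_of_mem hμ h2)
      · rw [iSup_neg hμ] at hy
        have h3 : y = 0 := by simpa using hy
        rw [h3, map_zero]
        exact Submodule.zero_mem _
    · show f 0 ∈ ⨆ μ ∈ S, Module.End.maxGenEigenspace f μ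
      rw [map_zero]; exact Submodule.zero_mem _
    · intro y z hy hz
      show f (y + z) ∈ ⨆ μ ∈ S, Module.End.maxGenEigenspace f μ
      rw [map_add]; exact Submodule.add_mem _ hy hz
  have hmemmax : ∀ (ν : ℂ) (w : Fin N → ℂ), f w = ν • w
      → w ∈ Module.End.maxGenEigenspace f ν := by
    intro ν w hw
    rw [Module.End.mem_maxGenEigenspace]
    refine ⟨1, ?_⟩
    rw [pow_one, LinearMap.sub_apply, hw]
    simp
  have heigm : ∀ (ν : ℂ) (w : Fin N → ℂ), w ∈ Vm → w ≠ 0 → f w = ν • w → ν.re < 0 := by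
    intro ν w hwV hw0 hfw
    by_cases hν : ν ∈ Sm
    · exact (Finset.mem_filter.mp hν).2
    · exfalso
      have hd := (Module.End.independent_maxGenEigenspace f).disjoint_biSup hν
      exact hw0 (Submodule.disjoint_def.mp hd w (hmemmax ν w hfw) hwV)
  have heigp : ∀ (ν : ℂ) (w : Fin N → ℂ), w ∈ Vp → w ≠ 0 → f w = ν • w → 0 < ν.re := by
    intro ν w hwV hw0 hfw
    by_cases hν : ν ∈ Sp
    · exact (Finset.mem_filter.mp hν).2
    · exfalso
      have hd := (Module.End.independent_maxGenEigenspace f).disjoint_biSup hν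
      exact hw0 (Submodule.disjoint_def.mp hd w (hmemmax ν w hfw) hwV)
  have hnegVm : ∀ x ∈ Vm, x ≠ 0 → ((mh A) x x).re < 0 :=
    lyap_on f (mh A) hsym hform Vm (hinvS Sm) heigm
  have hposVp : ∀ x ∈ Vp, x ≠ 0 → 0 < ((mh A) x x).re :=
    lyap_on_pos f (mh A) hsym hform Vp (hinvS Sp) heigp
  -- the comparison subspaces from A's spectral decomposition
  have hdimpi : Module.finrank ℂ (Fin N → ℂ) = N := by
    rw [Module.finrank_pi, Fintype.card_fin]
  set φm : (Fin N → ℂ) →ₗ[ℂ] ({i // hA.eigenvalues i < 0} → ℂ) :=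
    LinearMap.pi (fun i => (mh (1 : Matrix (Fin N) (Fin N) ℂ)) (evec hA i.1)) with hφm
  set φp : (Fin N → ℂ) →ₗ[ℂ] ({i // 0 < hA.eigenvalues i} → ℂ) :=
    LinearMap.pi (fun i => (mh (1 : Matrix (Fin N) (Fin N) ℂ)) (evec hA i.1)) with hφp
  have hcoord : ∀ (i : Fin N) (x : Fin N → ℂ),
      (mh (1 : Matrix (Fin N) (Fin N) ℂ)) (evec hA i) x
        = dotProduct (star (evec hA i)) x := by
    intro i x
    rw [mh_apply, Matrix.one_mulVec]
  have hdimP : N ≤ Module.finrank ℂ (LinearMap.ker φm) + p := by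
    have h1 := LinearMap.finrank_range_add_finrank_ker φm
    have h2 : Module.finrank ℂ (LinearMap.range φm) ≤ p := by
      refine le_trans (Submodule.finrank_le _) ?_
      rw [Module.finrank_pi, Fintype.card_subtype, hneg]
    rw [hdimpi] at h1
    omega
  have hdimQ : N ≤ Module.finrank ℂ (LinearMap.ker φp) + (N - p) := by
    have h1 := LinearMap.finrank_range_add_finrank_ker φp
    have h2 : Module.finrank ℂ (LinearMap.range φp) ≤ N - p := by
      refine le_trans (Submodule.finrank_le _) ?_
      rw [Module.finrank_pi, Fintype.card_subtype, hpos]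
    rw [hdimpi] at h1
    omega
  have hposP : ∀ x ∈ LinearMap.ker φm, 0 ≤ ((mh A) x x).re := by
    intro x hx
    rw [mh_spectral hA x]
    refine Finset.sum_nonneg fun i _ => ?_
    by_cases hi : hA.eigenvalues i < 0
    · have h4 := congrFun (LinearMap.mem_ker.mp hx) ⟨i, hi⟩
      rw [hφm] at h4
      rw [LinearMap.pi_apply] at h4
      rw [hcoord] at h4
      rw [h4]
      simp
    · push_neg at hi
      exact mul_nonneg hi (Complex.normSq_nonneg _)
  have hnegQ : ∀ x ∈ LinearMap.ker φp, ((mh A) x x).re ≤ 0 := by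
    intro x hx
    rw [mh_spectral hA x]
    refine Finset.sum_nonpos fun i _ => ?_
    by_cases hi : 0 < hA.eigenvalues i
    · have h4 := congrFun (LinearMap.mem_ker.mp hx) ⟨i, hi⟩
      rw [hφp] at h4
      rw [LinearMap.pi_apply] at h4
      rw [hcoord] at h4
      rw [h4]
      simp
    · push_neg at hi
      exact mul_nonpos_of_nonpos_of_nonneg hi (Complex.normSq_nonneg _)
  -- dimension bounds
  have hVmP : Module.finrank ℂ Vm + Module.finrank ℂ (LinearMap.ker φm) ≤ N := by
    have hd : Vm ⊓ LinearMap.ker φm = ⊥ := by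
      rw [Submodule.eq_bot_iff]
      intro y hy
      by_contra hy0
      have h5 := hnegVm y hy.1 hy0
      have h6 := hposP y hy.2
      linarith
    have h6 := Submodule.finrank_sup_add_finrank_inf_eq Vm (LinearMap.ker φm)
    rw [hd] at h6
    have h7 : Module.finrank ℂ (Vm ⊔ LinearMap.ker φm : Submodule ℂ (Fin N → ℂ)) ≤ N :=
      le_trans (Submodule.finrank_le _) (le_of_eq hdimpi)
    simp only [finrank_bot, add_zero] at h6
    omega
  have hVpQ : Module.finrank ℂ Vp + Module.finrank ℂ (LinearMap.ker φp) ≤ N := by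
    have hd : Vp ⊓ LinearMap.ker φp = ⊥ := by
      rw [Submodule.eq_bot_iff]
      intro y hy
      by_contra hy0
      have h5 := hposVp y hy.1 hy0
      have h6 := hnegQ y hy.2
      linarith
    have h6 := Submodule.finrank_sup_add_finrank_inf_eq Vp (LinearMap.ker φp)
    rw [hd] at h6
    have h7 : Module.finrank ℂ (Vp ⊔ LinearMap.ker φp : Submodule ℂ (Fin N → ℂ)) ≤ N :=
      le_trans (Submodule.finrank_le _) (le_of_eq hdimpi)
    simp only [finrank_bot, add_zero] at h6
    omega
  -- total count
  have htot : (M.charpoly.roots.filter (fun μ => μ.re < 0)).card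
      + (M.charpoly.roots.filter (fun μ => 0 < μ.re)).card = N := by
    have h8 : M.charpoly.roots.filter (fun μ => ¬ μ.re < 0)
        = M.charpoly.roots.filter (fun μ => 0 < μ.re) := by
      refine Multiset.filter_congr fun μ hμ => ?_
      have h9 := hrootne μ hμ
      constructor
      · intro h10
        rcases h9.lt_or_gt with hc | hc
        · exact absurd hc h10
        · exact hc
      · intro h10 h11
        linarith
    have h9 := congrArg Multiset.card
      (Multiset.filter_add_not (fun μ => μ.re < 0) M.charpoly.roots)
    rw [Multiset.card_add, h8, hcardroots] at h9
    exact h9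
  constructor
  · omega
  · omega
end
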